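/- For all real constants a > b > 0 and all parameters λ₁, λ₂ ∈ ℝ \ {a, b}, the functions K_{λ₁} and K_{λ₂} Poisson commute: {K_{λ₁}, K_{λ₂}}(x, y, ẋ, ẏ) = 0 at every point (x, y, ẋ, ẏ) ∈ ℝ⁴. -/

import Mathlib

/-- The function `K_λ` associated with the confocal family with parameters `a > b > 0`. -/
noncomputable def Kfun (a b lam : ℝ) (x y vx vy : ℝ) : ℝ :=
  vx ^ 2 / (a - lam) + vy ^ 2 / (b - lam) - (vx * y - vy * x) ^ 2 / ((a - lam) * (b - lam))

/-- The standard Poisson bracket of two functions of `(x, y, ẋ, ẏ)`. -/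
noncomputable def poissonBracket (f g : ℝ → ℝ → ℝ → ℝ → ℝ) (x y vx vy : ℝ) : ℝ :=
  (deriv (fun t => f t y vx vy) x) * (deriv (fun t => g x y t vy) vx)
  - (deriv (fun t => f x y t vy) vx) * (deriv (fun t => g t y vx vy) x)
  + (deriv (fun t => f x t vx vy) y) * (deriv (fun t => g x y vx t) vy)
  - (deriv (fun t => f x y vx t) vy) * (deriv (fun t => g x t vx vy) y)

lemma dKx (a b l x y vx vy : ℝ) :
    deriv (fun t => Kfun a b l t y vx vy) x
      = 2 * vy * (vx * y - vy * x) / ((a - l) * (b - l)) := by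
  have h1 : HasDerivAt (fun t : ℝ => vx * y - vy * t) (-vy) x := by
    simpa using (((hasDerivAt_id x).const_mul vy).const_sub (vx * y))
  have h2 := (h1.pow 2).div_const ((a - l) * (b - l))
  have h3 := ((hasDerivAt_const x (vx ^ 2 / (a - l) + vy ^ 2 / (b - l))).sub h2)
  have h4 : HasDerivAt (fun t => Kfun a b l t y vx vy)
      (2 * vy * (vx * y - vy * x) / ((a - l) * (b - l))) x := by
    convert h3 using 1
    · rfl
    · rfl
    · rfl
    · push_cast; ring
  exact h4.deriv

lemma dKy (a b l x y vx vy : ℝ) :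
    deriv (fun t => Kfun a b l x t vx vy) y
      = -(2 * vx * (vx * y - vy * x)) / ((a - l) * (b - l)) := by
  have h1 : HasDerivAt (fun t : ℝ => vx * t - vy * x) vx y := by
    simpa using (((hasDerivAt_id y).const_mul vx).sub_const (vy * x))
  have h2 := (h1.pow 2).div_const ((a - l) * (b - l))
  have h3 := ((hasDerivAt_const y (vx ^ 2 / (a - l) + vy ^ 2 / (b - l))).sub h2)
  have h4 : HasDerivAt (fun t => Kfun a b l x t vx vy)
      (-(2 * vx * (vx * y - vy * x)) / ((a - l) * (b - l))) y := by
    convert h3 using 1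
    · rfl
    · rfl
    · rfl
    · push_cast; ring
  exact h4.deriv

lemma dKvx (a b l x y vx vy : ℝ) :
    deriv (fun t => Kfun a b l x y t vy) vx
      = 2 * vx / (a - l) - 2 * y * (vx * y - vy * x) / ((a - l) * (b - l)) := by
  have h0 : HasDerivAt (fun t : ℝ => t ^ 2 / (a - l)) (2 * vx / (a - l)) vx := by
    simpa using ((hasDerivAt_id vx).pow 2).div_const (a - l)
  have h1 : HasDerivAt (fun t : ℝ => t * y - vy * x) y vx := by
    simpa using (((hasDerivAt_id vx).mul_const y).sub_const (vy * x))
  have h2 := (h1.pow 2).div_const ((a - l) * (b - l))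
  have h3 := (h0.add_const (vy ^ 2 / (b - l))).sub h2
  have h4 : HasDerivAt (fun t => Kfun a b l x y t vy)
      (2 * vx / (a - l) - 2 * y * (vx * y - vy * x) / ((a - l) * (b - l))) vx := by
    convert h3 using 1
    · rfl
    · rfl
    · rfl
    · push_cast; ring
  exact h4.deriv

lemma dKvy (a b l x y vx vy : ℝ) :
    deriv (fun t => Kfun a b l x y vx t) vy
      = 2 * vy / (b - l) + 2 * x * (vx * y - vy * x) / ((a - l) * (b - l)) := by
  have h0 : HasDerivAt (fun t : ℝ => t ^ 2 / (b - l)) (2 * vy / (b - l)) vy := by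
    simpa using ((hasDerivAt_id vy).pow 2).div_const (b - l)
  have h1 : HasDerivAt (fun t : ℝ => vx * y - t * x) (-x) vy := by
    simpa using (((hasDerivAt_id vy).mul_const x).const_sub (vx * y))
  have h2 := (h1.pow 2).div_const ((a - l) * (b - l))
  have h3 := (h0.const_add (vx ^ 2 / (a - l))).sub h2
  have h4 : HasDerivAt (fun t => Kfun a b l x y vx t)
      (2 * vy / (b - l) + 2 * x * (vx * y - vy * x) / ((a - l) * (b - l))) vy := by
    convert h3 using 1
    · rfl
    · rfl
    · rfl
    · push_cast; ring
  exact h4.deriv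

theorem poisson_commute_K
    (a b : ℝ) (ha : a > b) (hb : b > 0)
    (lam1 lam2 : ℝ) (h1a : lam1 ≠ a) (h1b : lam1 ≠ b) (h2a : lam2 ≠ a) (h2b : lam2 ≠ b)
    (x y vx vy : ℝ) :
    poissonBracket (Kfun a b lam1) (Kfun a b lam2) x y vx vy = 0 := by
  have e1a : a - lam1 ≠ 0 := sub_ne_zero.mpr (Ne.symm h1a)
  have e1b : b - lam1 ≠ 0 := sub_ne_zero.mpr (Ne.symm h1b)
  have e2a : a - lam2 ≠ 0 := sub_ne_zero.mpr (Ne.symm h2a)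
  have e2b : b - lam2 ≠ 0 := sub_ne_zero.mpr (Ne.symm h2b)
  rw [poissonBracket, dKx, dKx, dKy, dKy, dKvx, dKvx, dKvy, dKvy]
  field_simp
  ring
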